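/- In the Fantope maximization max_{H ∈ F^d} ⟨A, H⟩ for a symmetric matrix A, the maximizer is unique if and only if γ_d > γ_{d+1}, in which case the unique maximizer is Σ_{j=1}^d v_j v_j^T where v_j are orthonormal eigenvectors for the top d eigenvalues. -/

import Mathlib

open BigOperators Matrix
open scoped Classical

noncomputable def enorm {p : ℕ} (v : Fin p → ℝ) : ℝ := Real.sqrt (∑ i, (v i) ^ 2)

noncomputable def fnorm {p : ℕ} (A : Matrix (Fin p) (Fin p) ℝ) : ℝ :=
  Real.sqrt (∑ i, ∑ j, (A i j) ^ 2)

def outer {p : ℕ} (u v : Fin p → ℝ) : Matrix (Fin p) (Fin p) ℝ :=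
  Matrix.of fun i j => u i * v j

def inFantope {p : ℕ} (d : ℕ) (H : Matrix (Fin p) (Fin p) ℝ) : Prop :=
  H.IsSymm ∧ H.PosSemidef ∧ ((1 : Matrix (Fin p) (Fin p) ℝ) - H).PosSemidef ∧ H.trace = (d : ℝ)

section helpers
variable {p : ℕ}

lemma outer_isSymm (u : Fin p → ℝ) : (outer u u).IsSymm := by
  ext i j; simp [outer, Matrix.transpose_apply, mul_comm]

lemma outer_mulVec (u w x : Fin p → ℝ) : outer u w *ᵥ x = (w ⬝ᵥ x) • u := by
  ext i
  simp only [outer, Matrix.mulVec, dotProduct, Matrix.of_apply, Pi.smul_apply, smul_eq_mul,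
    Finset.sum_mul]
  exact Finset.sum_congr rfl fun j _ => by ring

lemma star_triv (x : Fin p → ℝ) : star x = x := by
  funext i; simp

lemma outer_psd (u : Fin p → ℝ) : (outer u u).PosSemidef := by
  refine Matrix.PosSemidef.of_dotProduct_mulVec_nonneg ?_ (fun x => ?_)
  · show (outer u u)ᴴ = outer u u
    ext i j; simp [outer, mul_comm]
  · rw [star_triv, outer_mulVec, dotProduct_smul]
    have : u ⬝ᵥ x * (x ⬝ᵥ u) = (u ⬝ᵥ x) ^ 2 := by rw [dotProduct_comm x u]; ring
    simpa [smul_eq_mul, this] using sq_nonneg (u ⬝ᵥ x)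

lemma sum_outer_psd (S : Finset (Fin p)) (v : Fin p → Fin p → ℝ) :
    (∑ k ∈ S, outer (v k) (v k)).PosSemidef := by
  refine Finset.sum_induction _ _ (fun a b ha hb => ha.add hb) ?_ (fun k _ => outer_psd (v k))
  exact Matrix.PosSemidef.zero

lemma complete (v : Fin p → Fin p → ℝ)
    (hortho : ∀ k l, v k ⬝ᵥ v l = if k = l then (1 : ℝ) else 0) :
    ∑ k, outer (v k) (v k) = 1 := by
  set V : Matrix (Fin p) (Fin p) ℝ := Matrix.of (fun k i => v k i) with hV
  have h1 : V * Vᵀ = 1 := by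
    ext k l
    simpa [hV, Matrix.mul_apply, dotProduct, Matrix.one_apply] using hortho k l
  have h2 : Vᵀ * V = 1 := mul_eq_one_comm.mp h1
  ext i j
  have := congrFun (congrFun h2 i) j
  simpa [hV, Matrix.mul_apply, Matrix.sum_apply, outer, mul_comm] using this

lemma trace_outer_mul (u w : Fin p → ℝ) (H : Matrix (Fin p) (Fin p) ℝ) :
    (outer u w * H).trace = w ⬝ᵥ H *ᵥ u := by
  simp only [Matrix.trace, Matrix.diag, Matrix.mul_apply, outer, Matrix.of_apply,
    dotProduct, Matrix.mulVec]
  rw [Finset.sum_comm]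
  exact Finset.sum_congr rfl fun l _ => by
    rw [Finset.mul_sum]; exact Finset.sum_congr rfl fun i _ => by ring

lemma trace_mul_outer (H : Matrix (Fin p) (Fin p) ℝ) (u w : Fin p → ℝ) :
    (H * outer u w).trace = w ⬝ᵥ H *ᵥ u := by
  simp only [Matrix.trace, Matrix.diag, Matrix.mul_apply, outer, Matrix.of_apply,
    dotProduct, Matrix.mulVec]
  exact Finset.sum_congr rfl fun i _ => by
    rw [Finset.mul_sum]; exact Finset.sum_congr rfl fun l _ => by ring

lemma mul_outer (H : Matrix (Fin p) (Fin p) ℝ) (u w : Fin p → ℝ) :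
    H * outer u w = outer (H *ᵥ u) w := by
  ext i j
  simp [Matrix.mul_apply, outer, Matrix.mulVec, dotProduct, Finset.sum_mul, mul_assoc]

lemma trace_outer (u w : Fin p → ℝ) : (outer u w).trace = u ⬝ᵥ w := by
  simp [Matrix.trace, Matrix.diag, outer, dotProduct]

variable (v : Fin p → Fin p → ℝ)
  (hortho : ∀ k l, v k ⬝ᵥ v l = if k = l then (1 : ℝ) else 0)

include hortho

lemma fantope_sum (S : Finset (Fin p)) :
    inFantope S.card (∑ k ∈ S, outer (v k) (v k)) := by
  refine ⟨?_, sum_outer_psd S v, ?_, ?_⟩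
  · unfold Matrix.IsSymm
    rw [Matrix.transpose_sum]
    exact Finset.sum_congr rfl fun k _ => outer_isSymm (v k)
  · have hcompl : (1 : Matrix (Fin p) (Fin p) ℝ) - ∑ k ∈ S, outer (v k) (v k)
        = ∑ k ∈ Sᶜ, outer (v k) (v k) := by
      rw [← complete v hortho, ← Finset.sum_add_sum_compl S]
      abel
    rw [hcompl]
    exact sum_outer_psd _ v
  · rw [Matrix.trace_sum]
    rw [Finset.sum_congr rfl (fun k (_ : k ∈ S) => show (outer (v k) (v k)).trace = (1:ℝ) by
      rw [trace_outer, hortho k k]; simp)]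
    simp

lemma diag_sum_outer (S : Finset (Fin p)) (j : Fin p) :
    v j ⬝ᵥ ((∑ k ∈ S, outer (v k) (v k)) *ᵥ v j) = if j ∈ S then 1 else 0 := by
  have hsum : (∑ k ∈ S, outer (v k) (v k)) *ᵥ v j = ∑ k ∈ S, (outer (v k) (v k) *ᵥ v j) := by
    ext i
    simp only [Matrix.mulVec, dotProduct, Matrix.sum_apply, Finset.sum_mul, Finset.sum_apply]
    exact Finset.sum_comm
  rw [hsum]
  rw [Finset.sum_congr rfl (fun k (_ : k ∈ S) => outer_mulVec (v k) (v k) (v j))]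
  have hdot : v j ⬝ᵥ ∑ k ∈ S, (v k ⬝ᵥ v j) • v k = ∑ k ∈ S, v j ⬝ᵥ ((v k ⬝ᵥ v j) • v k) := by
    simp only [dotProduct, Finset.sum_apply, Pi.smul_apply, smul_eq_mul, Finset.mul_sum]
    exact Finset.sum_comm
  rw [hdot]
  rw [Finset.sum_congr rfl (fun k (_ : k ∈ S) => show v j ⬝ᵥ (v k ⬝ᵥ v j) • v k
      = if k = j then (1:ℝ) else 0 by
    have h2 : v j ⬝ᵥ v k = if k = j then (1:ℝ) else 0 := by rw [dotProduct_comm]; exact hortho k j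
    rw [dotProduct_smul, smul_eq_mul, hortho k j, h2]
    split <;> norm_num)]
  simp [Finset.sum_ite_eq' S j (fun _ => (1:ℝ)), eq_comm]

lemma sum_diag_eq_trace (H : Matrix (Fin p) (Fin p) ℝ) :
    (∑ k, v k ⬝ᵥ H *ᵥ v k) = H.trace := by
  have : ∀ k, v k ⬝ᵥ H *ᵥ v k = (H * outer (v k) (v k)).trace :=
    fun k => (trace_mul_outer H (v k) (v k)).symm
  rw [Finset.sum_congr rfl (fun k _ => this k), ← Matrix.trace_sum, ← Finset.mul_sum,
    complete v hortho, mul_one]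

omit hortho in
lemma trace_A_mul (γ : Fin p → ℝ) (A H : Matrix (Fin p) (Fin p) ℝ)
    (hA : A = ∑ k, γ k • outer (v k) (v k)) :
    (A * H).trace = ∑ k, γ k * (v k ⬝ᵥ H *ᵥ v k) := by
  subst hA
  rw [Finset.sum_mul, Matrix.trace_sum]
  exact Finset.sum_congr rfl fun k _ => by
    rw [Matrix.smul_mul, Matrix.trace_smul, trace_outer_mul]; rfl

lemma trace_A_P (γ : Fin p → ℝ) (A : Matrix (Fin p) (Fin p) ℝ)
    (hA : A = ∑ k, γ k • outer (v k) (v k)) (S : Finset (Fin p)) :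
    (A * ∑ k ∈ S, outer (v k) (v k)).trace = ∑ k ∈ S, γ k := by
  rw [trace_A_mul v γ A _ hA]
  rw [Finset.sum_congr rfl (fun k _ => by rw [diag_sum_outer v hortho S k])]
  simp [Finset.sum_ite_mem, mul_ite, Finset.sum_filter]

end helpers

section main
variable {p : ℕ} (A : Matrix (Fin p) (Fin p) ℝ) (γ : Fin p → ℝ) (v : Fin p → Fin p → ℝ)
    (hA : A = ∑ k, γ k • outer (v k) (v k))
    (hortho : ∀ k l, v k ⬝ᵥ v l = if k = l then (1 : ℝ) else 0)
    (hmono : Antitone γ)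
    (d : ℕ) (hd1 : 1 ≤ d) (hdp : d < p)

omit hA hortho hmono hd1 in
include hdp in
lemma card_T : (Finset.univ.filter (fun k : Fin p => (k : ℕ) < d)).card = d := by
  have : Finset.univ.filter (fun k : Fin p => (k : ℕ) < d) = Finset.Iio (⟨d, hdp⟩ : Fin p) := by
    ext k; simp [Fin.lt_def]
  rw [this, Fin.card_Iio]

include hA hortho hmono hd1 hdp in
lemma maximizer_eq (hgap : γ ⟨d, hdp⟩ < γ ⟨d - 1, Nat.lt_of_le_of_lt (Nat.sub_le d 1) hdp⟩)
    (H : Matrix (Fin p) (Fin p) ℝ) (hF : inFantope d H)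
    (hmax : ∀ H' : Matrix (Fin p) (Fin p) ℝ,
      inFantope d H' → (A * H').trace ≤ (A * H).trace) :
    H = ∑ k ∈ Finset.univ.filter (fun k : Fin p => (k : ℕ) < d), outer (v k) (v k) := by
  set T := Finset.univ.filter (fun k : Fin p => (k : ℕ) < d) with hTdef
  have hcardT : T.card = d := card_T d hdp
  have hPF : inFantope d (∑ k ∈ T, outer (v k) (v k)) := by
    have := fantope_sum v hortho T
    rwa [hcardT] at this
  set h : Fin p → ℝ := fun k => v k ⬝ᵥ H *ᵥ v k with hhdef
  have h0 : ∀ k, 0 ≤ h k := fun k => by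
    have := hF.2.1.dotProduct_mulVec_nonneg (v k); rwa [star_triv] at this
  have h1 : ∀ k, h k ≤ 1 := fun k => by
    have := hF.2.2.1.dotProduct_mulVec_nonneg (v k)
    rw [star_triv, Matrix.sub_mulVec, dotProduct_sub, Matrix.one_mulVec] at this
    have hvv : v k ⬝ᵥ v k = 1 := by rw [hortho k k]; simp
    rw [hvv] at this
    simpa [hhdef] using by linarith
  have hsumh : ∑ k, h k = d := by
    rw [hhdef]; rw [sum_diag_eq_trace v hortho H]; exact hF.2.2.2
  set dm1 : Fin p := ⟨d - 1, Nat.lt_of_le_of_lt (Nat.sub_le d 1) hdp⟩ with hdm1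
  set dd : Fin p := ⟨d, hdp⟩ with hdd
  set c : ℝ := (γ dm1 + γ dd) / 2 with hc
  have hc1 : c < γ dm1 := by rw [hc]; linarith
  have hc2 : γ dd < c := by rw [hc]; linarith
  have hγT : ∀ k ∈ T, c < γ k := fun k hk => by
    have hkd : (k : ℕ) < d := by simpa [hTdef] using hk
    have : k ≤ dm1 := by rw [Fin.le_def]; simp [hdm1]; omega
    exact lt_of_lt_of_le hc1 (hmono this)
  have hγc : ∀ k ∉ T, γ k < c := fun k hk => by
    have hkd : d ≤ (k : ℕ) := by simpa [hTdef] using hk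
    have : dd ≤ k := by rw [Fin.le_def]; simpa [hdd]
    exact lt_of_le_of_lt (hmono this) hc2
  set g : Fin p → ℝ := fun k => if k ∈ T then (γ k - c) * (1 - h k) else (c - γ k) * h k
    with hgdef
  have hg0 : ∀ k, 0 ≤ g k := fun k => by
    rw [hgdef]
    by_cases hk : k ∈ T
    · simp only [hk, if_true]
      exact mul_nonneg (by linarith [hγT k hk]) (by linarith [h1 k])
    · simp only [hk, if_false]
      exact mul_nonneg (by linarith [hγc k hk]) (h0 k)
  have hkey : ∀ k, g k = (if k ∈ T then γ k else 0) - γ k * h k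
      + c * (h k - if k ∈ T then 1 else 0) := fun k => by
    rw [hgdef]; by_cases hk : k ∈ T <;> simp only [hk, if_true, if_false] <;> ring
  have hindsum : ∑ k, (if k ∈ T then γ k else 0) = ∑ k ∈ T, γ k := by
    rw [Finset.sum_ite_mem, Finset.univ_inter]
  have hindsum1 : ∑ k, (if k ∈ T then (1:ℝ) else 0) = (d : ℝ) := by
    rw [Finset.sum_ite_mem, Finset.univ_inter, Finset.sum_const, hcardT, nsmul_eq_mul, mul_one]
  have hsumg : ∑ k, g k = ∑ k ∈ T, γ k - (A * H).trace := by
    rw [Finset.sum_congr rfl (fun k _ => hkey k)]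
    rw [Finset.sum_add_distrib, Finset.sum_sub_distrib, ← Finset.mul_sum,
      Finset.sum_sub_distrib, hindsum, hindsum1, hsumh, trace_A_mul v γ A H hA]
    ring
  have hle : (A * ∑ k ∈ T, outer (v k) (v k)).trace ≤ (A * H).trace := hmax _ hPF
  have htrP : (A * ∑ k ∈ T, outer (v k) (v k)).trace = ∑ k ∈ T, γ k :=
    trace_A_P v hortho γ A hA T
  have hsumg0 : ∑ k, g k = 0 := by
    apply le_antisymm
    · rw [hsumg]; rw [htrP] at hle; linarith
    · exact Finset.sum_nonneg fun k _ => hg0 k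
  have hgzero : ∀ k, g k = 0 := fun k =>
    (Finset.sum_eq_zero_iff_of_nonneg (fun k _ => hg0 k)).mp hsumg0 k (Finset.mem_univ k)
  have hHv : ∀ k, H *ᵥ v k = if k ∈ T then v k else 0 := fun k => by
    by_cases hk : k ∈ T
    · have hg := hgzero k
      rw [hgdef] at hg
      simp only [hk, if_true] at hg
      have hh1 : h k = 1 := by
        rcases mul_eq_zero.mp hg with h' | h'
        · exact absurd h' (by linarith [hγT k hk])
        · linarith
      have hq : v k ⬝ᵥ ((1 - H) *ᵥ v k) = 0 := by
        rw [Matrix.sub_mulVec, dotProduct_sub, Matrix.one_mulVec]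
        have hvv : v k ⬝ᵥ v k = 1 := by rw [hortho k k]; simp
        rw [hvv]
        have : v k ⬝ᵥ H *ᵥ v k = 1 := hh1
        linarith
      have := (hF.2.2.1.dotProduct_mulVec_zero_iff (v k)).mp (by rwa [star_triv])
      rw [Matrix.sub_mulVec, Matrix.one_mulVec, sub_eq_zero] at this
      simp [hk, this.symm]
    · have hg := hgzero k
      rw [hgdef] at hg
      simp only [hk, if_false] at hg
      have hh0 : h k = 0 := by
        rcases mul_eq_zero.mp hg with h' | h'
        · exact absurd h' (by linarith [hγc k hk])
        · exact h'
      have := (hF.2.1.dotProduct_mulVec_zero_iff (v k)).mp (by rw [star_triv]; exact hh0)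
      simp [hk, this]
  calc H = H * 1 := (mul_one H).symm
    _ = H * ∑ k, outer (v k) (v k) := by rw [complete v hortho]
    _ = ∑ k, H * outer (v k) (v k) := Finset.mul_sum _ _ _
    _ = ∑ k, outer (H *ᵥ v k) (v k) := Finset.sum_congr rfl fun k _ => mul_outer H _ _
    _ = ∑ k ∈ T, outer (v k) (v k) := by
        rw [← Finset.sum_filter_add_sum_filter_not Finset.univ (fun k : Fin p => (k : ℕ) < d)]
        rw [← hTdef]
        have e1 : ∑ k ∈ T, outer (H *ᵥ v k) (v k) = ∑ k ∈ T, outer (v k) (v k) :=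
          Finset.sum_congr rfl fun k hk => by rw [hHv k, if_pos hk]
        have e2 : ∑ k ∈ Finset.univ.filter (fun k : Fin p => ¬ (k : ℕ) < d),
            outer (H *ᵥ v k) (v k) = 0 := Finset.sum_eq_zero fun k hk => by
          have hknot : k ∉ T := by
            simp only [hTdef, Finset.mem_filter, Finset.mem_univ, true_and]
            simpa [hTdef] using (Finset.mem_filter.mp hk).2
          rw [hHv k, if_neg hknot]
          ext i j; simp [outer]
        rw [e1, e2, add_zero]

include hA hortho hmono hdp in
lemma fantope_bound (H : Matrix (Fin p) (Fin p) ℝ) (hF : inFantope d H) :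
    (A * H).trace ≤ ∑ k ∈ Finset.univ.filter (fun k : Fin p => (k : ℕ) < d), γ k := by
  set T := Finset.univ.filter (fun k : Fin p => (k : ℕ) < d) with hTdef
  have hcardT : T.card = d := card_T d hdp
  set h : Fin p → ℝ := fun k => v k ⬝ᵥ H *ᵥ v k with hhdef
  have h0 : ∀ k, 0 ≤ h k := fun k => by
    have := hF.2.1.dotProduct_mulVec_nonneg (v k); rwa [star_triv] at this
  have h1 : ∀ k, h k ≤ 1 := fun k => by
    have := hF.2.2.1.dotProduct_mulVec_nonneg (v k)
    rw [star_triv, Matrix.sub_mulVec, dotProduct_sub, Matrix.one_mulVec] at this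
    have hvv : v k ⬝ᵥ v k = 1 := by rw [hortho k k]; simp
    rw [hvv] at this
    simpa [hhdef] using by linarith
  have hsumh : ∑ k, h k = d := by
    rw [hhdef]; rw [sum_diag_eq_trace v hortho H]; exact hF.2.2.2
  set dm1 : Fin p := ⟨d - 1, Nat.lt_of_le_of_lt (Nat.sub_le d 1) hdp⟩ with hdm1
  set c : ℝ := γ dm1 with hc
  have hγT : ∀ k ∈ T, c ≤ γ k := fun k hk => by
    have hkd : (k : ℕ) < d := by simpa [hTdef] using hk
    have : k ≤ dm1 := by rw [Fin.le_def]; simp [hdm1]; omega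
    exact hmono this
  have hγc : ∀ k ∉ T, γ k ≤ c := fun k hk => by
    have hkd : d ≤ (k : ℕ) := by simpa [hTdef] using hk
    have : dm1 ≤ k := by rw [Fin.le_def]; simp [hdm1]; omega
    exact hmono this
  set g : Fin p → ℝ := fun k => if k ∈ T then (γ k - c) * (1 - h k) else (c - γ k) * h k
    with hgdef
  have hg0 : ∀ k, 0 ≤ g k := fun k => by
    rw [hgdef]
    by_cases hk : k ∈ T
    · simp only [hk, if_true]
      exact mul_nonneg (by linarith [hγT k hk]) (by linarith [h1 k])
    · simp only [hk, if_false]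
      exact mul_nonneg (by linarith [hγc k hk]) (h0 k)
  have hkey : ∀ k, g k = (if k ∈ T then γ k else 0) - γ k * h k
      + c * (h k - if k ∈ T then 1 else 0) := fun k => by
    rw [hgdef]; by_cases hk : k ∈ T <;> simp only [hk, if_true, if_false] <;> ring
  have hindsum : ∑ k, (if k ∈ T then γ k else 0) = ∑ k ∈ T, γ k := by
    rw [Finset.sum_ite_mem, Finset.univ_inter]
  have hindsum1 : ∑ k, (if k ∈ T then (1:ℝ) else 0) = (d : ℝ) := by
    rw [Finset.sum_ite_mem, Finset.univ_inter, Finset.sum_const, hcardT, nsmul_eq_mul, mul_one]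
  have hsumg : ∑ k, g k = ∑ k ∈ T, γ k - (A * H).trace := by
    rw [Finset.sum_congr rfl (fun k _ => hkey k)]
    rw [Finset.sum_add_distrib, Finset.sum_sub_distrib, ← Finset.mul_sum,
      Finset.sum_sub_distrib, hindsum, hindsum1, hsumh, trace_A_mul v γ A H hA]
    ring
  have : (0:ℝ) ≤ ∑ k, g k := Finset.sum_nonneg fun k _ => hg0 k
  rw [hsumg] at this
  linarith

end main

theorem stmt6 {p : ℕ} (A : Matrix (Fin p) (Fin p) ℝ) (γ : Fin p → ℝ) (v : Fin p → Fin p → ℝ)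
    (hA : A = ∑ k, γ k • outer (v k) (v k))
    (hortho : ∀ k l, v k ⬝ᵥ v l = if k = l then (1 : ℝ) else 0)
    (hmono : Antitone γ)
    (heig : ∀ k, A *ᵥ v k = γ k • v k)
    (d : ℕ) (hd1 : 1 ≤ d) (hdp : d < p) :
    ((∃! H : Matrix (Fin p) (Fin p) ℝ,
        inFantope d H ∧ ∀ H' : Matrix (Fin p) (Fin p) ℝ,
          inFantope d H' → (A * H').trace ≤ (A * H).trace) ↔
      γ ⟨d, hdp⟩ < γ ⟨d - 1, by omega⟩) ∧
    (γ ⟨d, hdp⟩ < γ ⟨d - 1, by omega⟩ →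
      ∀ H : Matrix (Fin p) (Fin p) ℝ,
        (inFantope d H ∧ ∀ H' : Matrix (Fin p) (Fin p) ℝ,
          inFantope d H' → (A * H').trace ≤ (A * H).trace) →
        H = ∑ k ∈ Finset.univ.filter (fun k : Fin p => (k : ℕ) < d), outer (v k) (v k)) := by
  set T := Finset.univ.filter (fun k : Fin p => (k : ℕ) < d) with hTdef
  have hcardT : T.card = d := card_T d hdp
  have hPF : inFantope d (∑ k ∈ T, outer (v k) (v k)) := by
    have := fantope_sum v hortho T
    rwa [hcardT] at this
  have htrP : (A * ∑ k ∈ T, outer (v k) (v k)).trace = ∑ k ∈ T, γ k :=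
    trace_A_P v hortho γ A hA T
  set dm1 : Fin p := ⟨d - 1, by omega⟩ with hdm1
  set dd : Fin p := ⟨d, hdp⟩ with hdd
  have hPmax : ∀ H' : Matrix (Fin p) (Fin p) ℝ, inFantope d H' →
      (A * H').trace ≤ (A * ∑ k ∈ T, outer (v k) (v k)).trace := fun H' hH' => by
    rw [htrP]
    exact fantope_bound A γ v hA hortho hmono d hdp H' hH'
  constructor
  · constructor
    · intro hEU
      by_contra hng
      have hle1 : γ dd ≤ γ dm1 := hmono (by rw [Fin.le_def]; simp only [hdm1, hdd]; omega)
      have heq : γ dm1 = γ dd := le_antisymm (not_lt.mp hng) hle1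
      have hdm1T : dm1 ∈ T := by simp [hTdef, hdm1]; omega
      have hddT : dd ∉ T := by simp [hTdef, hdd]
      set T' := insert dd (T.erase dm1) with hT'def
      have hddE : dd ∉ T.erase dm1 := fun h => hddT (Finset.mem_of_mem_erase h)
      have hcardT' : T'.card = d := by
        rw [hT'def, Finset.card_insert_of_notMem hddE, Finset.card_erase_of_mem hdm1T, hcardT]
        omega
      have hsum' : ∑ k ∈ T', γ k = ∑ k ∈ T, γ k := by
        rw [hT'def, Finset.sum_insert hddE, ← heq, Finset.add_sum_erase T γ hdm1T]
      have hPF' : inFantope d (∑ k ∈ T', outer (v k) (v k)) := by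
        have := fantope_sum v hortho T'
        rwa [hcardT'] at this
      have htrP' : (A * ∑ k ∈ T', outer (v k) (v k)).trace = ∑ k ∈ T, γ k := by
        rw [trace_A_P v hortho γ A hA T', hsum']
      have hP'max : ∀ H' : Matrix (Fin p) (Fin p) ℝ, inFantope d H' →
          (A * H').trace ≤ (A * ∑ k ∈ T', outer (v k) (v k)).trace := fun H' hH' => by
        rw [htrP']
        exact fantope_bound A γ v hA hortho hmono d hdp H' hH'
      have hPeq : (∑ k ∈ T, outer (v k) (v k)) = ∑ k ∈ T', outer (v k) (v k) :=
        hEU.unique ⟨hPF, hPmax⟩ ⟨hPF', hP'max⟩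
      have h1 : v dd ⬝ᵥ ((∑ k ∈ T, outer (v k) (v k)) *ᵥ v dd) = 0 := by
        rw [diag_sum_outer v hortho T dd, if_neg hddT]
      have h2 : v dd ⬝ᵥ ((∑ k ∈ T', outer (v k) (v k)) *ᵥ v dd) = 1 := by
        rw [diag_sum_outer v hortho T' dd, if_pos (Finset.mem_insert_self dd _)]
      rw [hPeq, h2] at h1
      norm_num at h1
    · intro hgap
      refine ⟨∑ k ∈ T, outer (v k) (v k), ⟨hPF, hPmax⟩, fun H hH => ?_⟩
      exact maximizer_eq A γ v hA hortho hmono d hd1 hdp hgap H hH.1 hH.2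
  · intro hgap H hH
    exact maximizer_eq A γ v hA hortho hmono d hd1 hdp hgap H hH.1 hH.2
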